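/- Let Ω ⊆ ℝ² be open, μ, λ ∈ ℝ, let u : ℝ² → ℝ² be twice continuously differentiable on Ω and p : ℝ² → ℝ continuously differentiable on Ω, and suppose that on Ω the Stokes eigenvalue equations hold: −μ(Δu₁,Δu₂) + ∇p = λu and div(u) = 0. Define the stress σ := μ·underline_curl(u) − p·J. Then on Ω: curl(σ) = −λu, σ^r = μ·underline_curl(u), and p = −(1/2)(σ:J). -/

import Mathlib

/-- The matrix `J` with rows `(0, 1)` and `(-1, 0)`. -/
def J : Matrix (Fin 2) (Fin 2) ℝ := !![0, 1; -1, 0]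

/-- The Frobenius inner product `τ : σ = ∑ i j, τ i j * σ i j` of 2×2 real matrices. -/
def frob (τ σ : Matrix (Fin 2) (Fin 2) ℝ) : ℝ := ∑ i, ∑ j, τ i j * σ i j

/-- `τ^r := τ − (1/2)(τ:J)·J`. -/
noncomputable def taur (τ : Matrix (Fin 2) (Fin 2) ℝ) : Matrix (Fin 2) (Fin 2) ℝ :=
  τ - ((1 / 2) * frob τ J) • J

/-- Partial derivative `∂f/∂x_j` at `x` of a scalar field on `ℝ²`. -/
noncomputable def pd (f : (Fin 2 → ℝ) → ℝ) (x : Fin 2 → ℝ) (j : Fin 2) : ℝ :=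
  fderiv ℝ f x (Pi.single j 1)

/-- `underline_curl(u)`: the 2×2 matrix field whose `i`-th row is `(−∂uᵢ/∂x₂, ∂uᵢ/∂x₁)`. -/
noncomputable def ucurl (u : (Fin 2 → ℝ) → (Fin 2 → ℝ)) (x : Fin 2 → ℝ) :
    Matrix (Fin 2) (Fin 2) ℝ :=
  !![-pd (fun y => u y 0) x 1, pd (fun y => u y 0) x 0;
     -pd (fun y => u y 1) x 1, pd (fun y => u y 1) x 0]

/-- `curl(τ) := (∂τ₁₂/∂x₁ − ∂τ₁₁/∂x₂, ∂τ₂₂/∂x₁ − ∂τ₂₁/∂x₂)` of a 2×2 matrix field. -/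
noncomputable def mcurl (τ : (Fin 2 → ℝ) → Matrix (Fin 2) (Fin 2) ℝ) (x : Fin 2 → ℝ) :
    Fin 2 → ℝ :=
  ![pd (fun y => τ y 0 1) x 0 - pd (fun y => τ y 0 0) x 1,
    pd (fun y => τ y 1 1) x 0 - pd (fun y => τ y 1 0) x 1]

/-- `div(u) := ∂u₁/∂x₁ + ∂u₂/∂x₂`. -/
noncomputable def divg (u : (Fin 2 → ℝ) → (Fin 2 → ℝ)) (x : Fin 2 → ℝ) : ℝ :=
  pd (fun y => u y 0) x 0 + pd (fun y => u y 1) x 1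

/-- The Laplacian `Δf := ∂²f/∂x₁² + ∂²f/∂x₂²` of a scalar field on `ℝ²`. -/
noncomputable def lap (f : (Fin 2 → ℝ) → ℝ) (x : Fin 2 → ℝ) : ℝ :=
  pd (fun y => pd f y 0) x 0 + pd (fun y => pd f y 1) x 1

lemma pd_comb (a b : ℝ) (f g : (Fin 2 → ℝ) → ℝ) (x : Fin 2 → ℝ) (j : Fin 2)
    (hf : DifferentiableAt ℝ f x) (hg : DifferentiableAt ℝ g x) :
    pd (fun y => a * f y + b * g y) x j = a * pd f x j + b * pd g x j := by
  unfold pd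
  rw [fderiv_fun_add ((hf.const_mul a)) ((hg.const_mul b)), fderiv_const_mul hf, fderiv_const_mul hg]
  simp

lemma diffAt_pd {f : (Fin 2 → ℝ) → ℝ} {Ω : Set (Fin 2 → ℝ)} (hΩ : IsOpen Ω)
    (hf : ContDiffOn ℝ 2 f Ω) {x : Fin 2 → ℝ} (hx : x ∈ Ω) (j : Fin 2) :
    DifferentiableAt ℝ (fun y => pd f y j) x := by
  have h : ContDiffAt ℝ 2 f x := hf.contDiffAt (hΩ.mem_nhds hx)
  have h2 : ContDiffAt ℝ 1 (fderiv ℝ f) x := h.fderiv_right (by norm_num)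
  exact (h2.differentiableAt one_ne_zero).clm_apply (differentiableAt_const _)

/-- If `(u, p, λ)` solves the Stokes eigenvalue problem `−μΔu + ∇p = λu`, `div u = 0` on an
open set `Ω`, then the stress `σ := μ·underline_curl(u) − p·J` satisfies, on `Ω`,
`curl(σ) = −λu`, `σ^r = μ·underline_curl(u)` and `p = −(1/2)(σ:J)`. -/
theorem stokes_to_stress_velocity (Ω : Set (Fin 2 → ℝ)) (hΩ : IsOpen Ω) (μ lam : ℝ)
    (u : (Fin 2 → ℝ) → (Fin 2 → ℝ)) (p : (Fin 2 → ℝ) → ℝ)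
    (hu : ContDiffOn ℝ 2 u Ω) (hp : ContDiffOn ℝ 1 p Ω)
    (hmom : ∀ x ∈ Ω, (fun i => -μ * lap (fun y => u y i) x + pd p x i) =
      fun i => lam * u x i)
    (hdiv : ∀ x ∈ Ω, divg u x = 0)
    (σ : (Fin 2 → ℝ) → Matrix (Fin 2) (Fin 2) ℝ)
    (hσ : ∀ x, σ x = μ • ucurl u x - p x • J) :
    ∀ x ∈ Ω, mcurl σ x = (fun i => -lam * u x i) ∧
      taur (σ x) = μ • ucurl u x ∧
      p x = -(1 / 2) * frob (σ x) J := by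
  intro x hx
  have hdp : DifferentiableAt ℝ p x :=
    (hp.contDiffAt (hΩ.mem_nhds hx)).differentiableAt one_ne_zero
  have hcomp : ∀ i : Fin 2, ContDiffOn ℝ 2 (fun y => u y i) Ω := fun i =>
    (ContinuousLinearMap.proj (R := ℝ) (φ := fun _ : Fin 2 => ℝ) i).contDiff.comp_contDiffOn hu
  have hd : ∀ i j : Fin 2, DifferentiableAt ℝ (fun y => pd (fun z => u z i) y j) x :=
    fun i j => diffAt_pd hΩ (hcomp i) hx j
  have h00 : (fun y => σ y 0 0) = fun y => (-μ) * pd (fun z => u z 0) y 1 + (0:ℝ) * p y := by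
    funext y; simp [hσ, ucurl, J]; try ring
  have h01 : (fun y => σ y 0 1) = fun y => μ * pd (fun z => u z 0) y 0 + (-1:ℝ) * p y := by
    funext y; simp [hσ, ucurl, J]; try ring
  have h10 : (fun y => σ y 1 0) = fun y => (-μ) * pd (fun z => u z 1) y 1 + (1:ℝ) * p y := by
    funext y; simp [hσ, ucurl, J]; try ring
  have h11 : (fun y => σ y 1 1) = fun y => μ * pd (fun z => u z 1) y 0 + (0:ℝ) * p y := by
    funext y; simp [hσ, ucurl, J]; try ring
  have e00 := h00 ▸ pd_comb (-μ) 0 _ p x 1 (hd 0 1) hdp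
  have e01 := h01 ▸ pd_comb μ (-1) _ p x 0 (hd 0 0) hdp
  have e10 := h10 ▸ pd_comb (-μ) 1 _ p x 1 (hd 1 1) hdp
  have e11 := h11 ▸ pd_comb μ 0 _ p x 0 (hd 1 0) hdp
  have hm0 := congrFun (hmom x hx) 0
  have hm1 := congrFun (hmom x hx) 1
  simp only [lap] at hm0 hm1
  have hd0 := hdiv x hx
  unfold divg at hd0
  have hfrob : frob (σ x) J = -2 * p x := by
    simp [frob, Fin.sum_univ_two, J, hσ, ucurl]
    linear_combination μ * hd0
  refine ⟨?_, ?_, ?_⟩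
  · funext i
    fin_cases i
    · show pd (fun y => σ y 0 1) x 0 - pd (fun y => σ y 0 0) x 1 = -lam * u x 0
      rw [e01, e00]
      linear_combination (-1 : ℝ) * hm0
    · show pd (fun y => σ y 1 1) x 0 - pd (fun y => σ y 1 0) x 1 = -lam * u x 1
      rw [e11, e10]
      linear_combination (-1 : ℝ) * hm1
  · rw [taur, hfrob, hσ x]
    module
  · rw [hfrob]; ring
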